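/- arXiv:2003.11773 — 2 statements merged into one kernel-verified Lean document; each statement's English description precedes it below -/
import Mathlib

section
/- Let m, p, q be positive integers with gcd(p, q) = 1, and set N = m·p·q. Let h be a generator of the cyclic group ℤ/Nℤ. Then for any elements a, b of ℤ/Nℤ of orders p and q respectively, there exists a group automorphism η of ℤ/Nℤ such that η(a) = (m·q)·h and η(b) = (m·p)·h. -/
private lemma key_decomp (N d e : ℕ) [NeZero N] (hd : 0 < d) (hN : N = d * e)
    (a : ZMod N) (ha : addOrderOf a = d) :
    ∃ s : ℕ, Nat.Coprime s d ∧ a = (e : ZMod N) * s := by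
  have hda : d • a = 0 := ha ▸ addOrderOf_nsmul_eq_zero a
  have hval : a = ((a.val : ℕ) : ZMod N) := (ZMod.natCast_rightInverse a).symm
  have hdvd : N ∣ d * a.val := by
    rw [← ZMod.natCast_eq_zero_iff]
    push_cast
    rw [← hval, ← nsmul_eq_mul, hda]
  have he : e ∣ a.val := by
    obtain ⟨k, hk⟩ := hdvd
    refine ⟨k, ?_⟩
    have hd' : d ≠ 0 := hd.ne'
    have : d * a.val = d * (e * k) := by rw [hk, hN]; ring
    exact Nat.eq_of_mul_eq_mul_left hd this
  set s := a.val / e with hs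
  have hse : a.val = e * s := (Nat.mul_div_cancel' he).symm
  have has : a = (e : ZMod N) * s := by
    rw [hval, hse]; push_cast; ring
  refine ⟨s, ?_, has⟩
  set g := Nat.gcd s d with hg
  have hgpos : 0 < g := Nat.gcd_pos_of_pos_right s hd
  have hgs : g ∣ s := Nat.gcd_dvd_left s d
  have hgd : g ∣ d := Nat.gcd_dvd_right s d
  set d' := d / g with hd'
  have hdd' : d = g * d' := (Nat.mul_div_cancel' hgd).symm
  have hd'pos : 0 < d' := Nat.div_pos (Nat.le_of_dvd hd hgd) hgpos
  have hzero : d' • a = 0 := by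
    rw [has, nsmul_eq_mul]
    have : (d' : ZMod N) * ((e : ZMod N) * s) = ((d' * (e * s) : ℕ) : ZMod N) := by
      push_cast; ring
    rw [this, ZMod.natCast_eq_zero_iff]
    obtain ⟨s', hs'⟩ := hgs
    refine ⟨s', ?_⟩
    rw [hs', hN, hdd']; ring
  have hdvd2 : d ∣ d' := ha ▸ addOrderOf_dvd_of_nsmul_eq_zero hzero
  have hd'd : d' ∣ d := ⟨g, by rw [hdd']; ring⟩
  have : d = d' := Nat.dvd_antisymm hdvd2 hd'd
  rw [← this] at hdd'
  nlinarith [hd, hgpos, hdd']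

private lemma kill (N d e : ℕ) [NeZero N] (hd : d ≠ 0) (hN : N = d * e) (x : ZMod N)
    (hx : (ZMod.castHom ⟨e, hN⟩ (ZMod d)) x = 0) : (e : ZMod N) * x = 0 := by
  haveI : NeZero d := ⟨hd⟩
  have h1 : ((x.val : ℕ) : ZMod d) = 0 := by
    rwa [ZMod.natCast_val, ← ZMod.castHom_apply (h := ⟨e, hN⟩)]
  have h2 : d ∣ x.val := (ZMod.natCast_eq_zero_iff _ _).mp h1
  obtain ⟨k, hk⟩ := h2
  have hval : x = ((x.val : ℕ) : ZMod N) := (ZMod.natCast_rightInverse x).symm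
  rw [hval, hk]
  have : (e : ZMod N) * ((d * k : ℕ) : ZMod N) = ((N * k : ℕ) : ZMod N) := by
    push_cast; rw [hN]; push_cast; ring
  rw [this]
  simp [ZMod.natCast_self]

/-- Let `m, p, q` be positive integers with `gcd(p, q) = 1`, and set
`N = m * p * q`. Let `h` be a generator of `ℤ/Nℤ`. Then for any elements `a, b` of `ℤ/Nℤ`
of orders `p` and `q` respectively, there exists a group automorphism `η` of `ℤ/Nℤ` such
that `η a = (m * q) • h` and `η b = (m * p) • h`. -/
theorem cyclic_automorphism_normalization
    (m p q : ℕ) (hm : 0 < m) (hp : 0 < p) (hq : 0 < q) (hpq : Nat.gcd p q = 1)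
    (N : ℕ) (hN : N = m * p * q)
    (h : ZMod N) (hh : addOrderOf h = N)
    (a b : ZMod N) (ha : addOrderOf a = p) (hb : addOrderOf b = q) :
    ∃ η : ZMod N ≃+ ZMod N, η a = (m * q) • h ∧ η b = (m * p) • h := by
  haveI : NeZero N := ⟨by rw [hN]; positivity⟩
  -- h is a unit
  obtain ⟨w, hwcop, hwh⟩ := key_decomp N N 1 (Nat.pos_of_ne_zero (NeZero.ne N)) (by ring) h hh
  have hhu : IsUnit h := by
    rw [hwh]
    simpa using (ZMod.isUnit_iff_coprime w N).mpr hwcop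
  -- decompose a and b
  obtain ⟨s, hscop, has⟩ := key_decomp N p (m * q) hp (by rw [hN]; ring) a ha
  obtain ⟨t, htcop, hbt⟩ := key_decomp N q (m * p) hq (by rw [hN]; ring) b hb
  -- CRT
  have hpq' : Nat.Coprime p q := hpq
  let us : (ZMod p)ˣ := ZMod.unitOfCoprime s hscop
  let ut : (ZMod q)ˣ := ZMod.unitOfCoprime t htcop
  obtain ⟨y, hy⟩ := (ZMod.chineseRemainder hpq').surjective ((↑us⁻¹ : ZMod p), (↑ut⁻¹ : ZMod q))
  have hy1 : (ZMod.castHom (dvd_mul_right p q) (ZMod p)) y = (↑us⁻¹ : ZMod p) := by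
    have := congrArg Prod.fst hy
    simpa [ZMod.chineseRemainder, ZMod.castHom_apply, Prod.fst_zmod_cast] using this
  have hy2 : (ZMod.castHom (dvd_mul_left q p) (ZMod q)) y = (↑ut⁻¹ : ZMod q) := by
    have := congrArg Prod.snd hy
    simpa [ZMod.chineseRemainder, ZMod.castHom_apply, Prod.snd_zmod_cast] using this
  have hyu : IsUnit y := by
    have hpair : IsUnit ((↑us⁻¹ : ZMod p), (↑ut⁻¹ : ZMod q)) :=
      IsUnit.of_mul_eq_one ((↑us : ZMod p), (↑ut : ZMod q)) (by
        simp [Prod.mk_mul_mk])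
    have := hpair.map (ZMod.chineseRemainder hpq').symm
    rwa [← hy, RingEquiv.symm_apply_apply] at this
  have hdvdpq : p * q ∣ N := ⟨m, by rw [hN]; ring⟩
  obtain ⟨U, hU⟩ := ZMod.unitsMap_surjective hdvdpq hyu.unit
  have hUc : (ZMod.castHom hdvdpq (ZMod (p * q))) (↑U : ZMod N) = y := by
    have := congrArg (Units.val) hU
    simpa [ZMod.unitsMap_def] using this
  have hUp : (ZMod.castHom (dvd_trans (dvd_mul_right p q) hdvdpq) (ZMod p)) (↑U : ZMod N)
      = (↑us⁻¹ : ZMod p) := by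
    rw [← hy1, ← hUc]
    rw [← RingHom.comp_apply, ZMod.castHom_comp]
  have hUq : (ZMod.castHom (dvd_trans (dvd_mul_left q p) hdvdpq) (ZMod q)) (↑U : ZMod N)
      = (↑ut⁻¹ : ZMod q) := by
    rw [← hy2, ← hUc]
    rw [← RingHom.comp_apply, ZMod.castHom_comp]
  -- the automorphism
  refine ⟨DistribMulAction.toAddEquiv (ZMod N) (hhu.unit * U), ?_, ?_⟩
  · show ((hhu.unit * U : (ZMod N)ˣ) : ZMod N) * a = (m * q) • h
    have hNpe : N = p * (m * q) := by rw [hN]; ring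
    have hx : (ZMod.castHom ⟨m * q, hNpe⟩ (ZMod p)) ((↑U : ZMod N) * (s : ZMod N) - 1) = 0 := by
      rw [map_sub, map_mul, map_one, map_natCast]
      rw [hUp,
        show ((s : ℕ) : ZMod p) = ((us : (ZMod p)ˣ) : ZMod p) from
          (ZMod.coe_unitOfCoprime s hscop).symm, Units.inv_mul, sub_self]
    have hkill := kill N p (m * q) hp.ne' hNpe _ hx
    rw [has, Units.val_mul, IsUnit.unit_spec]
    rw [nsmul_eq_mul]
    push_cast at hkill ⊢
    linear_combination h * hkill
  · show ((hhu.unit * U : (ZMod N)ˣ) : ZMod N) * b = (m * p) • h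
    have hNpe : N = q * (m * p) := by rw [hN]; ring
    have hx : (ZMod.castHom ⟨m * p, hNpe⟩ (ZMod q)) ((↑U : ZMod N) * (t : ZMod N) - 1) = 0 := by
      rw [map_sub, map_mul, map_one, map_natCast]
      rw [hUq,
        show ((t : ℕ) : ZMod q) = ((ut : (ZMod q)ˣ) : ZMod q) from
          (ZMod.coe_unitOfCoprime t htcop).symm, Units.inv_mul, sub_self]
    have hkill := kill N q (m * p) hq.ne' hNpe _ hx
    rw [hbt, Units.val_mul, IsUnit.unit_spec]
    rw [nsmul_eq_mul]
    push_cast at hkill ⊢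
    linear_combination h * hkill
end

section
/- Let p be a positive integer and let q₁, q₂, r be integers such that gcd(p, q₁) = 1, gcd(p, q₂) = 1, and q₁·q₂ ≡ r² (mod p). Then there exist integers a₁, b₁, a₂, b₂, m, n such that gcd(a₁, b₁) = 1, gcd(a₂, b₂) = 1, gcd(a₁, a₂) = 1, a₁·b₂ + a₂·b₁ = p, a₁·a₂ ≡ q₂ (mod p), m·a₁ − n·b₁ = 1, and m·a₂ + n·b₂ ≡ q₁ (mod p). -/
/-- Arithmetic core of the construction showing that the lens space
`L(p, q₁)` 1-dominates `L(p, q₂)` whenever `q₁·q₂` is a square modulo `p`. -/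
theorem lens_space_domination_arithmetic
    (p : ℤ) (hp : 0 < p) (q₁ q₂ r : ℤ)
    (h1 : Int.gcd p q₁ = 1) (h2 : Int.gcd p q₂ = 1)
    (h3 : p ∣ q₁ * q₂ - r ^ 2) :
    ∃ a₁ b₁ a₂ b₂ m n : ℤ,
      Int.gcd a₁ b₁ = 1 ∧ Int.gcd a₂ b₂ = 1 ∧ Int.gcd a₁ a₂ = 1 ∧
      a₁ * b₂ + a₂ * b₁ = p ∧ p ∣ a₁ * a₂ - q₂ ∧
      m * a₁ - n * b₁ = 1 ∧ p ∣ m * a₂ + n * b₂ - q₁ := by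
  rw [← Int.isCoprime_iff_gcd_eq_one] at h1 h2
  obtain ⟨k, hk⟩ := h3
  -- p is coprime to r
  have hpr2 : IsCoprime p (r ^ 2) := by
    obtain ⟨x, y, hxy⟩ := h1.mul_right h2
    exact ⟨x + y * k, y, by linear_combination hxy - y * hk⟩
  have hpr : IsCoprime p r :=
    hpr2.of_isCoprime_of_dvd_right ⟨r, by ring⟩
  obtain ⟨u, s, hus⟩ := hpr  -- u*p + s*r = 1
  have hps : IsCoprime p s := ⟨u, r, by linear_combination hus⟩
  set a₁ : ℤ := q₂ * s with ha1
  set a₂ : ℤ := a₁ * q₁ + p with ha2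
  have hpa1 : IsCoprime p a₁ := h2.mul_right hps
  have hpa2 : IsCoprime p a₂ := by
    have h := (hpa1.mul_right h1).add_mul_left_right 1
    rwa [show a₁ * q₁ + p * 1 = a₂ by rw [ha2]; ring] at h
  have ha12 : IsCoprime a₁ a₂ := by
    have h := hpa1.symm.add_mul_left_right q₁
    rwa [show p + a₁ * q₁ = a₂ by rw [ha2]; ring] at h
  obtain ⟨c, d, hcd⟩ := ha12  -- c*a₁ + d*a₂ = 1
  set b₂ : ℤ := c * p with hb2
  set b₁ : ℤ := d * p with hb1
  have hsum : a₁ * b₂ + a₂ * b₁ = p := by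
    rw [hb1, hb2]; linear_combination p * hcd
  have ha1b1 : IsCoprime a₁ b₁ := by
    obtain ⟨x, y, hxy⟩ := hpa1.symm
    exact ⟨x + y * b₂, y * a₂, by linear_combination hxy + y * hsum⟩
  have ha2b2 : IsCoprime a₂ b₂ := by
    obtain ⟨x, y, hxy⟩ := hpa2.symm
    exact ⟨x + y * b₁, y * a₁, by linear_combination hxy + y * hsum⟩
  obtain ⟨m, n0, hmn⟩ := id ha1b1  -- m*a₁ + n0*b₁ = 1
  have key : p ∣ q₁ * q₂ * s ^ 2 - 1 :=
    ⟨k * s ^ 2 + u ^ 2 * p - 2 * u, by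
      linear_combination s ^ 2 * hk + (s * r + 1 - u * p) * hus⟩
  obtain ⟨w1, hw1⟩ := key
  refine ⟨a₁, b₁, a₂, b₂, m, -n0,
    Int.isCoprime_iff_gcd_eq_one.mp ha1b1,
    Int.isCoprime_iff_gcd_eq_one.mp ha2b2,
    Int.isCoprime_iff_gcd_eq_one.mp ⟨c, d, hcd⟩,
    hsum, ?_, by linear_combination hmn, ?_⟩
  · exact ⟨q₂ * w1 + a₁, by
      rw [ha2, ha1]; linear_combination q₂ * hw1⟩
  · refine hpa1.dvd_of_dvd_mul_left ⟨1 - n0, ?_⟩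
    linear_combination a₂ * hmn - n0 * hsum + ha2
end
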